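/- For a linear network with n ≥ 3 nodes and blocking range β = n-2, setting σ_1 = σ_n = α and σ_i = α(1+α) for 2 ≤ i ≤ n-1 yields equal throughputs θ_i = α/(1+(n-1)α) for all i, where θ_i = Z_n^{-1} Σ_{ω feasible, ω_i=1} Π_j σ_j^{ω_j}. -/

import Mathlib

open Finset

/-- A state (set of active nodes, 0-indexed) is feasible if no two distinct
active nodes are within distance β of each other. -/
def Feasible (n β : ℕ) (S : Finset (Fin n)) : Prop :=
  ∀ i ∈ S, ∀ j ∈ S, i ≠ j → β < ((i : ℤ) - (j : ℤ)).natAbs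

instance (n β : ℕ) : DecidablePred (Feasible n β) := fun S =>
  inferInstanceAs (Decidable (∀ i ∈ S, ∀ j ∈ S, i ≠ j → β < ((i : ℤ) - (j : ℤ)).natAbs))

/-- Product-form weight of a state. -/
def weight {n : ℕ} (σ : Fin n → ℝ) (S : Finset (Fin n)) : ℝ := ∏ i ∈ S, σ i

/-- for β = n-2, setting σ_1 = σ_n = α and σ_i = α(1+α) for the
interior nodes yields equal throughputs α/(1+(n-1)α). -/
theorem stmt2 (n : ℕ) (hn : 3 ≤ n) (α : ℝ) (hα : 0 < α)
    (σ : Fin n → ℝ)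
    (hσ : ∀ v : Fin n,
      σ v = if (v : ℕ) = 0 ∨ (v : ℕ) = n - 1 then α else α * (1 + α))
    (Z : ℝ)
    (hZ : Z = ∑ S ∈ univ.filter (Feasible n (n - 2)), weight σ S) :
    ∀ v : Fin n,
      (∑ S ∈ univ.filter (fun S => Feasible n (n - 2) S ∧ v ∈ S), weight σ S) / Z
        = α / (1 + (n - 1) * α) := by
  have hn1 : n - 1 < n := by omega
  set e0 : Fin n := ⟨0, by omega⟩ with he0
  set e1 : Fin n := ⟨n-1, hn1⟩ with he1
  have h01 : e0 ≠ e1 := by simp [Fin.ext_iff, he0, he1]; omega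
  have hfeas : ∀ S : Finset (Fin n), Feasible n (n-2) S ↔
      S = ∅ ∨ (∃ i, S = {i}) ∨ S = {e0, e1} := by
    intro S
    constructor
    · intro hF
      rcases Nat.lt_or_ge S.card 2 with hc | hc
      · interval_cases h : S.card
        · exact Or.inl (Finset.card_eq_zero.mp h)
        · exact Or.inr (Or.inl (Finset.card_eq_one.mp h))
      · refine Or.inr (Or.inr ?_)
        obtain ⟨a, ha, b, hb, hab⟩ := Finset.one_lt_card.mp hc
        have hsub : S ⊆ {e0, e1} := by
          intro k hk
          simp only [Finset.mem_insert, Finset.mem_singleton]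
          by_contra hne
          push_neg at hne
          obtain ⟨hk0, hk1⟩ := hne
          have hk0' : (k : ℕ) ≠ 0 := fun h => hk0 (Fin.ext (by simp [he0, h]))
          have hk1' : (k : ℕ) ≠ n - 1 := fun h => hk1 (Fin.ext (by simp [he1, h]))
          rcases eq_or_ne k a with rfl | hka
          · have := hF k hk b hb (by rintro rfl; exact hab rfl)
            have h1 : (k : ℕ) < n := k.isLt
            have h2 : (b : ℕ) < n := b.isLt
            omega
          · have := hF k hk a ha hka
            have h1 : (k : ℕ) < n := k.isLt
            have h2 : (a : ℕ) < n := a.isLt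
            omega
        have hcard2 : ({e0, e1} : Finset (Fin n)).card = 2 := Finset.card_pair h01
        exact Finset.eq_of_subset_of_card_le hsub (by omega)
    · rintro (rfl | ⟨i, rfl⟩ | rfl) <;> intro i hi j hj hij
      · simp at hi
      · simp at hi hj; subst hi; subst hj; exact absurd rfl hij
      · simp only [Finset.mem_insert, Finset.mem_singleton] at hi hj
        have h0 : ((e0 : Fin n) : ℕ) = 0 := rfl
        have h1 : ((e1 : Fin n) : ℕ) = n - 1 := rfl
        rcases hi with rfl | rfl <;> rcases hj with rfl | rfl <;>
          first
            | exact absurd rfl hij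
            | (simp only [h0, h1]; push_cast; omega)
  -- values of σ
  have hσ0 : σ e0 = α := by rw [hσ]; simp [he0]
  have hσ1 : σ e1 = α := by rw [hσ]; simp [he1]
  -- weight of the pair
  have hwpair : weight σ {e0, e1} = α * α := by
    rw [weight, Finset.prod_pair h01, hσ0, hσ1]
  -- Z value
  have hZval : Z = (1 + ((n : ℝ) - 1) * α) * (1 + α) := by
    have hFset : univ.filter (Feasible n (n-2)) =
        insert ∅ (insert {e0, e1} (univ.image fun i => ({i} : Finset (Fin n)))) := by
      ext S
      simp only [Finset.mem_filter, Finset.mem_univ, true_and, Finset.mem_insert,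
        Finset.mem_image, hfeas S]
      constructor
      · rintro (h | ⟨i, h⟩ | h)
        · exact Or.inl h
        · exact Or.inr (Or.inr ⟨i, h.symm⟩)
        · exact Or.inr (Or.inl h)
      · rintro (h | h | ⟨i, h⟩)
        · exact Or.inl h
        · exact Or.inr (Or.inr h)
        · exact Or.inr (Or.inl ⟨i, h.symm⟩)
    have hpair_card : ({e0, e1} : Finset (Fin n)).card = 2 := Finset.card_pair h01
    have h1 : (∅ : Finset (Fin n)) ∉
        insert {e0, e1} (univ.image fun i => ({i} : Finset (Fin n))) := by
      simp only [Finset.mem_insert, Finset.mem_image, not_or]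
      constructor
      · intro h; rw [← h] at hpair_card; simp at hpair_card
      · push_neg; intro i _; exact Finset.singleton_nonempty i
    have h2 : ({e0, e1} : Finset (Fin n)) ∉
        univ.image fun i => ({i} : Finset (Fin n)) := by
      simp only [Finset.mem_image, not_exists]
      intro i h
      rcases h with ⟨-, h⟩
      rw [← h] at hpair_card; simp at hpair_card
    rw [hZ, hFset, Finset.sum_insert h1, Finset.sum_insert h2,
      Finset.sum_image (fun a _ b _ h => Finset.singleton_injective h)]
    have hwempty : weight σ (∅ : Finset (Fin n)) = 1 := by simp [weight]
    have hwsingle : ∀ i : Fin n, weight σ ({i} : Finset (Fin n)) = σ i := by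
      intro i; simp [weight]
    simp only [hwempty, hwpair, hwsingle]
    -- sum of σ over all nodes
    have hsum : ∑ i : Fin n, σ i = 2 * α + ((n : ℝ) - 2) * (α * (1 + α)) := by
      have : ∀ i : Fin n, σ i =
          if (i : ℕ) = 0 ∨ (i : ℕ) = n - 1 then α else α * (1 + α) := hσ
      rw [Finset.sum_congr rfl fun i _ => this i]
      rw [Finset.sum_ite]
      rw [Finset.sum_const, Finset.sum_const]
      have hf : Finset.filter (fun i : Fin n => (i : ℕ) = 0 ∨ (i : ℕ) = n - 1) univ
          = {e0, e1} := by
        ext i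
        simp only [Finset.mem_filter, Finset.mem_univ, true_and, Finset.mem_insert,
          Finset.mem_singleton, Fin.ext_iff, he0, he1]
      have hcf : (Finset.filter (fun i : Fin n => (i : ℕ) = 0 ∨ (i : ℕ) = n - 1) univ).card
          = 2 := by rw [hf]; exact hpair_card
      have hcnf : (Finset.filter (fun i : Fin n => ¬((i : ℕ) = 0 ∨ (i : ℕ) = n - 1)) univ).card
          = n - 2 := by
        have := Finset.card_filter_add_card_filter_not
          (s := (univ : Finset (Fin n)))
          (p := fun i : Fin n => (i : ℕ) = 0 ∨ (i : ℕ) = n - 1)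
        simp only [Finset.card_univ, Fintype.card_fin] at this
        omega
      rw [hcf, hcnf]
      have : ((n - 2 : ℕ) : ℝ) = (n : ℝ) - 2 := by
        push_cast [Nat.cast_sub (by omega : 2 ≤ n)]; ring
      rw [nsmul_eq_mul, nsmul_eq_mul, this]
      push_cast; ring
    rw [hsum]; ring
  intro v
  have hnum : (∑ S ∈ univ.filter (fun S => Feasible n (n - 2) S ∧ v ∈ S), weight σ S)
      = α * (1 + α) := by
    by_cases hv : (v : ℕ) = 0 ∨ (v : ℕ) = n - 1
    · -- boundary node
      have hvmem : v ∈ ({e0, e1} : Finset (Fin n)) := by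
        simp only [Finset.mem_insert, Finset.mem_singleton, Fin.ext_iff, he0, he1]
        exact hv
      have hFset : univ.filter (fun S => Feasible n (n - 2) S ∧ v ∈ S)
          = {{v}, {e0, e1}} := by
        ext S
        simp only [Finset.mem_filter, Finset.mem_univ, true_and, hfeas S,
          Finset.mem_insert, Finset.mem_singleton]
        constructor
        · rintro ⟨(rfl | ⟨i, rfl⟩ | rfl), hvS⟩
          · simp at hvS
          · simp only [Finset.mem_singleton] at hvS; subst hvS; exact Or.inl rfl
          · exact Or.inr rfl
        · rintro (rfl | rfl)
          · exact ⟨Or.inr (Or.inl ⟨v, rfl⟩), Finset.mem_singleton_self v⟩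
          · exact ⟨Or.inr (Or.inr rfl), hvmem⟩
      have hne : ({v} : Finset (Fin n)) ≠ {e0, e1} := by
        intro h
        have := Finset.card_pair h01
        rw [← h] at this; simp at this
      rw [hFset, Finset.sum_pair hne, hwpair]
      have : weight σ ({v} : Finset (Fin n)) = σ v := by simp [weight]
      rw [this, hσ v, if_pos hv]; ring
    · -- interior node
      have hFset : univ.filter (fun S => Feasible n (n - 2) S ∧ v ∈ S)
          = {({v} : Finset (Fin n))} := by
        ext S
        simp only [Finset.mem_filter, Finset.mem_univ, true_and, hfeas S,
          Finset.mem_singleton]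
        constructor
        · rintro ⟨(rfl | ⟨i, rfl⟩ | rfl), hvS⟩
          · simp at hvS
          · simp only [Finset.mem_singleton] at hvS; subst hvS; rfl
          · exfalso
            simp only [Finset.mem_insert, Finset.mem_singleton, Fin.ext_iff,
              he0, he1] at hvS
            exact hv hvS
        · rintro rfl
          exact ⟨Or.inr (Or.inl ⟨v, rfl⟩), Finset.mem_singleton_self v⟩
      rw [hFset, Finset.sum_singleton]
      have : weight σ ({v} : Finset (Fin n)) = σ v := by simp [weight]
      rw [this, hσ v, if_neg hv]
  rw [hnum, hZval]
  have h1α : (1 : ℝ) + α ≠ 0 := by positivity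
  rw [mul_div_mul_right _ _ h1α]
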